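/- Let D be a class of bipartite degree sequences containing some α with non-empty first class and some β with non-empty second class, and let D̄ be its closure under Tyshkevich composition. Then D̄ is not P-stable: for d(r) = (α∘β)^{∘r}, there is a degree sequence d' with ‖d' − d(r)‖₁ = 2 such that |𝒢(d')| ≥ |𝒢(d(r))| · c^r for some constant c > 1, so no polynomial p can satisfy |𝒢(d')| ≤ p(n)·|𝒢(d(r))| for all r. -/

import Mathlib

/-- A splitted bipartite degree sequence. -/
structure BipDeg where
  nA : ℕ
  nB : ℕ
  dA : Fin nA → ℕ
  dB : Fin nB → ℕ

/-- The number of (labelled) bipartite realizations of a bipartite degree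
sequence, `|𝒢(d)|`. -/
noncomputable def BipDeg.count (d : BipDeg) : ℕ :=
  Set.ncard {E : Fin d.nA → Fin d.nB → Bool |
    (∀ a, (Finset.univ.filter fun b => E a b = true).card = d.dA a) ∧
    (∀ b, (Finset.univ.filter fun a => E a b = true).card = d.dB b)}

/-- Tyshkevich composition of bipartite degree sequences: the first factor's
`A`-degrees grow by the size of the second factor's `B`-class, and the second
factor's `B`-degrees grow by the size of the first factor's `A`-class. -/
def BipDeg.comp (d₁ d₂ : BipDeg) : BipDeg where
  nA := d₁.nA + d₂.nA
  nB := d₁.nB + d₂.nB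
  dA := Fin.addCases (fun i => d₁.dA i + d₂.nB) (fun i => d₂.dA i)
  dB := Fin.addCases (fun i => d₁.dB i) (fun i => d₂.dB i + d₁.nA)

/-- `BipDeg.pow d r` is the `(r+1)`-fold Tyshkevich composition
`d ∘ d ∘ ⋯ ∘ d`. -/
def BipDeg.pow (d : BipDeg) : ℕ → BipDeg
  | 0 => d
  | r + 1 => d.comp (d.pow r)

namespace Stab


/-- start of the block of `l`: (max element of `T` below `l`) + 1, or `0`. -/
def pfun (T : Finset ℕ) (l : ℕ) : ℕ :=
  if h : (T.filter (· < l)).Nonempty then (T.filter (· < l)).max' h + 1 else 0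

/-- end of the block of `k`: least element of `insert (r-1) T` that is `≥ k`. -/
def qfun (T : Finset ℕ) (r k : ℕ) : ℕ :=
  if h : ((insert (r-1) T).filter (k ≤ ·)).Nonempty then
    ((insert (r-1) T).filter (k ≤ ·)).min' h else 0

/-- The replacement matrix: staircase with an alternating path determined by `T`. -/
def Fmat (T : Finset ℕ) (r k l : ℕ) : Bool :=
  (decide (k ≤ l) && !(decide (l ∈ insert (r-1) T) && decide (pfun T l = k)))
  || (decide (l ∈ T) && decide (k = l + 1))

lemma Fmat_iff {T : Finset ℕ} {r k l : ℕ} :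
    Fmat T r k l = true ↔
      ((k ≤ l ∧ ¬(l ∈ insert (r-1) T ∧ pfun T l = k)) ∨ (l ∈ T ∧ k = l + 1)) := by
  simp [Fmat]; tauto

lemma pfun_le (T : Finset ℕ) (l : ℕ) : pfun T l ≤ l := by
  unfold pfun
  split
  · rename_i h
    have := Finset.max'_mem _ h
    simp only [Finset.mem_filter] at this
    omega
  · omega

lemma pfun_cond {T : Finset ℕ} {l k : ℕ} (h : pfun T l = k) :
    k = 0 ∨ (0 < k ∧ k - 1 ∈ T) := by
  unfold pfun at h
  split at h
  · rename_i hne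
    have hmm := Finset.max'_mem _ hne
    simp only [Finset.mem_filter] at hmm
    right
    refine ⟨by omega, ?_⟩
    have hk1 : (T.filter (· < l)).max' hne = k - 1 := by omega
    rw [hk1] at hmm
    exact hmm.1
  · left; omega

lemma qfun_nonempty {T : Finset ℕ} {r k : ℕ} (hk : k ≤ r - 1) :
    ((insert (r-1) T).filter (k ≤ ·)).Nonempty :=
  ⟨r - 1, by simp [Finset.mem_filter, hk]⟩

lemma qfun_mem {T : Finset ℕ} {r k : ℕ} (hk : k ≤ r - 1) :
    qfun T r k ∈ insert (r-1) T ∧ k ≤ qfun T r k := by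
  have h := qfun_nonempty (T := T) hk
  unfold qfun
  rw [dif_pos h]
  have := Finset.min'_mem _ h
  simp only [Finset.mem_filter] at this
  exact this

lemma qfun_min {T : Finset ℕ} {r k x : ℕ} (hk : k ≤ r - 1)
    (hx : x ∈ insert (r-1) T) (hkx : k ≤ x) : qfun T r k ≤ x := by
  have h := qfun_nonempty (T := T) hk
  unfold qfun
  rw [dif_pos h]
  exact Finset.min'_le _ _ (by simp [Finset.mem_filter, hx, hkx])

lemma pfun_qfun {T : Finset ℕ} {r k : ℕ}
    (hcond : k = 0 ∨ (0 < k ∧ k - 1 ∈ T)) (hk : k ≤ r - 1) :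
    pfun T (qfun T r k) = k := by
  obtain ⟨hqm, hkq⟩ := qfun_mem (T := T) (r := r) hk
  unfold pfun
  split
  · rename_i hne
    have hmm := Finset.max'_mem _ hne
    simp only [Finset.mem_filter] at hmm
    -- max' ∈ T, max' < qfun
    have hub : (T.filter (· < qfun T r k)).max' hne ≤ k - 1 := by
      by_contra hlt
      push_neg at hlt
      have hkm : k ≤ (T.filter (· < qfun T r k)).max' hne := by
        rcases hcond with h0 | ⟨hpos, _⟩
        · omega
        · omega
      have := qfun_min (T := T) (r := r) hk (Finset.mem_insert_of_mem hmm.1) hkm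
      omega
    rcases hcond with h0 | ⟨hpos, hmem⟩
    · -- k = 0 : but then filter should be empty; max' ≥ 0 fine, need contradiction?
      -- k=0: hub : max' ≤ 0-1 = 0... that's not a contradiction. do directly:
      -- any t ∈ T with t < qfun contradicts minimality since 0 ≤ t
      exfalso
      have := qfun_min (T := T) (r := r) hk (Finset.mem_insert_of_mem hmm.1) (by omega)
      omega
    · have hlb : k - 1 ≤ (T.filter (· < qfun T r k)).max' hne :=
        Finset.le_max' _ _ (by simp [Finset.mem_filter, hmem]; omega)
      omega
  · rename_i hne
    rcases hcond with h0 | ⟨hpos, hmem⟩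
    · omega
    · exfalso
      exact hne ⟨k - 1, by simp [Finset.mem_filter, hmem]; omega⟩

lemma qfun_uniq {T : Finset ℕ} {r k l : ℕ} (hT : ∀ x ∈ T, x < r - 1)
    (hl : l ∈ insert (r-1) T) (hkl : k ≤ l) (hp : pfun T l = k) :
    l = qfun T r k := by
  have hlr : l ≤ r - 1 := by
    rcases Finset.mem_insert.1 hl with h | h
    · omega
    · exact le_of_lt (hT _ h)
  have hk : k ≤ r - 1 := le_trans hkl hlr
  have hq := qfun_min (T := T) hk hl hkl
  rcases eq_or_lt_of_le hq with h | h
  · omega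
  · exfalso
    obtain ⟨hqm, hkq⟩ := qfun_mem (T := T) (r := r) hk
    have hqT : qfun T r k ∈ T := by
      rcases Finset.mem_insert.1 hqm with h1 | h1
      · omega
      · exact h1
    have hne : (T.filter (· < l)).Nonempty := ⟨qfun T r k, by simp [Finset.mem_filter, hqT, h]⟩
    have : qfun T r k ≤ (T.filter (· < l)).max' hne :=
      Finset.le_max' _ _ (by simp [Finset.mem_filter, hqT, h])
    unfold pfun at hp
    rw [dif_pos hne] at hp
    omega


lemma filter_le_range_card (r k : ℕ) :
    ((Finset.range r).filter (fun l => k ≤ l)).card = r - k := by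
  have : (Finset.range r).filter (fun l => k ≤ l) = Finset.Ico k r := by
    ext l; simp [Finset.mem_Ico]; omega
  rw [this, Nat.card_Ico]

lemma Fmat_row {T : Finset ℕ} {r k : ℕ} (hT : ∀ x ∈ T, x < r - 1) (hk : k < r) :
    ((Finset.range r).filter (fun l => Fmat T r k l = true)).card
      = r - k - (if k = 0 then 1 else 0) := by
  classical
  have hsplit : (Finset.range r).filter (fun l => Fmat T r k l = true)
      = ((Finset.range r).filter (fun l => k ≤ l ∧ ¬(l ∈ insert (r-1) T ∧ pfun T l = k)))
        ∪ ((Finset.range r).filter (fun l => l ∈ T ∧ k = l + 1)) := by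
    rw [← Finset.filter_or]
    exact Finset.filter_congr (fun l _ => by rw [Fmat_iff])
  have hkr : k ≤ r - 1 := by omega
  set S := (Finset.range r).filter (fun l => k ≤ l) with hS
  have hA : ((Finset.range r).filter
      (fun l => k ≤ l ∧ ¬(l ∈ insert (r-1) T ∧ pfun T l = k)))
      = S \ S.filter (fun l => l ∈ insert (r-1) T ∧ pfun T l = k) := by
    rw [← Finset.filter_not, Finset.filter_filter]
  have hbad : S.filter (fun l => l ∈ insert (r-1) T ∧ pfun T l = k)
      = if k = 0 ∨ (0 < k ∧ k - 1 ∈ T) then {qfun T r k} else ∅ := by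
    split
    · rename_i hcond
      ext l
      simp only [Finset.mem_filter, Finset.mem_singleton, hS, Finset.mem_range]
      constructor
      · rintro ⟨⟨hlr, hkl⟩, hmem, hp⟩
        exact qfun_uniq hT hmem hkl hp
      · rintro rfl
        obtain ⟨hqm, hkq⟩ := qfun_mem (T := T) (r := r) hkr
        refine ⟨⟨?_, hkq⟩, hqm, pfun_qfun hcond hkr⟩
        rcases Finset.mem_insert.1 hqm with h | h
        · omega
        · have := hT _ h; omega
    · rename_i hcond
      ext l
      simp only [Finset.mem_filter, Finset.notMem_empty, iff_false, not_and]
      intro _ _ hp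
      exact hcond (pfun_cond hp)
  have hB : ((Finset.range r).filter (fun l => l ∈ T ∧ k = l + 1))
      = if 0 < k ∧ k - 1 ∈ T then {k-1} else ∅ := by
    split
    · rename_i hc
      ext l
      simp only [Finset.mem_filter, Finset.mem_singleton, Finset.mem_range]
      constructor
      · rintro ⟨_, _, h⟩; omega
      · rintro rfl
        have := hT _ hc.2
        exact ⟨by omega, hc.2, by omega⟩
    · rename_i hc
      ext l
      simp only [Finset.mem_filter, Finset.notMem_empty, iff_false, not_and]
      intro _ hl
      intro hkl
      exact hc ⟨by omega, by rw [show k - 1 = l by omega]; exact hl⟩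
  have hdisj : Disjoint
      ((Finset.range r).filter (fun l => k ≤ l ∧ ¬(l ∈ insert (r-1) T ∧ pfun T l = k)))
      ((Finset.range r).filter (fun l => l ∈ T ∧ k = l + 1)) := by
    rw [Finset.disjoint_left]
    intro a ha hb
    simp only [Finset.mem_filter] at ha hb
    omega
  rw [hsplit, Finset.card_union_of_disjoint hdisj, hA, hbad, hB]
  have hScard : S.card = r - k := filter_le_range_card r k
  have hqS : qfun T r k ∈ S := by
    obtain ⟨hqm, hkq⟩ := qfun_mem (T := T) (r := r) hkr
    simp only [hS, Finset.mem_filter, Finset.mem_range]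
    refine ⟨?_, hkq⟩
    rcases Finset.mem_insert.1 hqm with h | h
    · omega
    · have := hT _ h; omega
  have hsd : (S \ {qfun T r k}).card = r - k - 1 := by
    rw [Finset.card_sdiff_of_subset (Finset.singleton_subset_iff.2 hqS), hScard, Finset.card_singleton]
  by_cases h0 : k = 0
  · subst h0
    rw [if_pos (Or.inl rfl), if_neg (by omega), if_pos rfl, hsd]
    simp
  · rw [if_neg h0]
    by_cases h1 : k - 1 ∈ T
    · rw [if_pos (Or.inr ⟨by omega, h1⟩), if_pos ⟨by omega, h1⟩, hsd, Finset.card_singleton]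
      omega
    · rw [if_neg (by rintro (h | ⟨_, h⟩); exact h0 h; exact h1 h),
        if_neg (by rintro ⟨_, h⟩; exact h1 h)]
      simp [hScard]

lemma Fmat_col {T : Finset ℕ} {r l : ℕ} (hT : ∀ x ∈ T, x < r - 1) (hl : l < r) :
    ((Finset.range r).filter (fun k => Fmat T r k l = true)).card
      = l + 1 - (if l = r - 1 then 1 else 0) := by
  classical
  have hsplit : (Finset.range r).filter (fun k => Fmat T r k l = true)
      = ((Finset.range r).filter (fun k => k ≤ l ∧ ¬(l ∈ insert (r-1) T ∧ pfun T l = k)))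
        ∪ ((Finset.range r).filter (fun k => l ∈ T ∧ k = l + 1)) := by
    rw [← Finset.filter_or]
    exact Finset.filter_congr (fun k _ => by rw [Fmat_iff])
  have hdisj : Disjoint
      ((Finset.range r).filter (fun k => k ≤ l ∧ ¬(l ∈ insert (r-1) T ∧ pfun T l = k)))
      ((Finset.range r).filter (fun k => l ∈ T ∧ k = l + 1)) := by
    rw [Finset.disjoint_left]
    intro a ha hb
    simp only [Finset.mem_filter] at ha hb
    omega
  rw [hsplit, Finset.card_union_of_disjoint hdisj]
  have hple := pfun_le T l
  by_cases hmem : l ∈ insert (r-1) T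
  · have hA : ((Finset.range r).filter
        (fun k => k ≤ l ∧ ¬(l ∈ insert (r-1) T ∧ pfun T l = k)))
        = (Finset.range (l+1)).erase (pfun T l) := by
      ext k
      simp only [Finset.mem_filter, Finset.mem_erase, Finset.mem_range, hmem, true_and]
      constructor
      · rintro ⟨hkr, hkl, hne⟩
        exact ⟨fun h => hne h.symm, by omega⟩
      · rintro ⟨hne, hkl⟩
        exact ⟨by omega, by omega, fun h => hne h.symm⟩
    rw [hA, Finset.card_erase_of_mem (by simp only [Finset.mem_range]; omega),
      Finset.card_range]
    by_cases hlT : l ∈ T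
    · have hlr : l < r - 1 := hT _ hlT
      have hB : ((Finset.range r).filter (fun k => l ∈ T ∧ k = l + 1)) = {l+1} := by
        ext k
        simp only [Finset.mem_filter, Finset.mem_singleton, Finset.mem_range]
        constructor
        · rintro ⟨_, _, h⟩; exact h
        · rintro rfl; exact ⟨by omega, hlT, rfl⟩
      rw [hB, if_neg (by omega)]
      simp
    · have hB : ((Finset.range r).filter (fun k => l ∈ T ∧ k = l + 1)) = ∅ := by
        ext k; simp [hlT]
      have hlr : l = r - 1 := by
        rcases Finset.mem_insert.1 hmem with h | h
        · exact h
        · exact absurd h hlT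
      rw [hB, if_pos hlr]
      simp
  · have hlT : l ∉ T := fun h => hmem (Finset.mem_insert_of_mem h)
    have hlr : l ≠ r - 1 := fun h => hmem (by rw [h]; exact Finset.mem_insert_self _ _)
    have hA : ((Finset.range r).filter
        (fun k => k ≤ l ∧ ¬(l ∈ insert (r-1) T ∧ pfun T l = k)))
        = Finset.range (l+1) := by
      ext k
      simp only [Finset.mem_filter, Finset.mem_range, hmem, false_and, not_false_iff, and_true]
      omega
    have hB : ((Finset.range r).filter (fun k => l ∈ T ∧ k = l + 1)) = ∅ := by
      ext k; simp [hlT]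
    rw [hA, hB, if_neg hlr]
    simp

lemma Fmat_sub (T : Finset ℕ) (r m : ℕ) : Fmat T r (m+1) m = decide (m ∈ T) := by
  simp [Fmat]


def Realizes (d : BipDeg) (E : Fin d.nA → Fin d.nB → Bool) : Prop :=
  (∀ a, (Finset.univ.filter fun b => E a b = true).card = d.dA a) ∧
  (∀ b, (Finset.univ.filter fun a => E a b = true).card = d.dB b)

lemma card_filter_eq_sum {n : ℕ} (p : Fin n → Bool) :
    (Finset.univ.filter fun b => p b = true).card = ∑ b, if p b = true then 1 else 0 :=
  Finset.card_filter _ _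

lemma comp_dA_left (d₁ d₂ : BipDeg) (a : Fin d₁.nA) :
    (d₁.comp d₂).dA (Fin.castAdd d₂.nA a) = d₁.dA a + d₂.nB := by
  simp [BipDeg.comp]

lemma comp_dA_right (d₁ d₂ : BipDeg) (a : Fin d₂.nA) :
    (d₁.comp d₂).dA (Fin.natAdd d₁.nA a) = d₂.dA a := by
  simp [BipDeg.comp]

lemma comp_dB_left (d₁ d₂ : BipDeg) (b : Fin d₁.nB) :
    (d₁.comp d₂).dB (Fin.castAdd d₂.nB b) = d₁.dB b := by
  simp [BipDeg.comp]

lemma comp_dB_right (d₁ d₂ : BipDeg) (b : Fin d₂.nB) :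
    (d₁.comp d₂).dB (Fin.natAdd d₁.nB b) = d₂.dB b + d₁.nA := by
  simp [BipDeg.comp]

lemma balance {d : BipDeg} {E : Fin d.nA → Fin d.nB → Bool} (hE : Realizes d E) :
    ∑ i, d.dA i = ∑ j, d.dB j := by
  calc ∑ i, d.dA i = ∑ a, ∑ b, (if E a b = true then 1 else 0) := by
        refine Finset.sum_congr rfl fun a _ => ?_
        rw [← hE.1 a, card_filter_eq_sum]
    _ = ∑ b, ∑ a, (if E a b = true then 1 else 0) := Finset.sum_comm
    _ = ∑ j, d.dB j := by
        refine Finset.sum_congr rfl fun b _ => ?_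
        rw [← hE.2 b, card_filter_eq_sum]

lemma forced {d₁ d₂ : BipDeg} (hbal : ∑ i, d₁.dA i = ∑ j, d₁.dB j)
    {E : Fin (d₁.comp d₂).nA → Fin (d₁.comp d₂).nB → Bool}
    (hE : Realizes (d₁.comp d₂) E) :
    (∀ (a : Fin d₁.nA) (b : Fin d₂.nB),
        E (Fin.castAdd d₂.nA a) (Fin.natAdd d₁.nB b) = true) ∧
    (∀ (a : Fin d₂.nA) (b : Fin d₁.nB),
        E (Fin.natAdd d₁.nA a) (Fin.castAdd d₂.nB b) = false) ∧
    Realizes d₁ (fun a b => E (Fin.castAdd d₂.nA a) (Fin.castAdd d₂.nB b)) ∧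
    Realizes d₂ (fun a b => E (Fin.natAdd d₁.nA a) (Fin.natAdd d₁.nB b)) := by
  set ind : Fin (d₁.comp d₂).nA → Fin (d₁.comp d₂).nB → ℕ :=
    fun a b => if E a b = true then 1 else 0 with hind
  have hrow : ∀ a, ∑ b, ind a b = (d₁.comp d₂).dA a := fun a => by
    rw [← hE.1 a, card_filter_eq_sum]
  have hcol : ∀ b, ∑ a, ind a b = (d₁.comp d₂).dB b := fun b => by
    rw [← hE.2 b, card_filter_eq_sum]
  have h1 : (∑ a : Fin d₁.nA, ∑ b : Fin d₁.nB, ind (Fin.castAdd d₂.nA a) (Fin.castAdd d₂.nB b))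
      + (∑ a : Fin d₁.nA, ∑ b : Fin d₂.nB, ind (Fin.castAdd d₂.nA a) (Fin.natAdd d₁.nB b))
      = (∑ i, d₁.dA i) + d₁.nA * d₂.nB := by
    rw [← Finset.sum_add_distrib]
    calc (∑ a : Fin d₁.nA, ((∑ b : Fin d₁.nB, ind (Fin.castAdd d₂.nA a) (Fin.castAdd d₂.nB b))
          + ∑ b : Fin d₂.nB, ind (Fin.castAdd d₂.nA a) (Fin.natAdd d₁.nB b)))
        = ∑ a : Fin d₁.nA, ∑ b, ind (Fin.castAdd d₂.nA a) b := by
          refine Finset.sum_congr rfl fun a _ => ?_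
          exact (Fin.sum_univ_add (f := fun b => ind (Fin.castAdd d₂.nA a) b)).symm
      _ = ∑ a : Fin d₁.nA, (d₁.dA a + d₂.nB) := by
          refine Finset.sum_congr rfl fun a _ => ?_
          exact (hrow _).trans (comp_dA_left _ _ _)
      _ = (∑ i, d₁.dA i) + d₁.nA * d₂.nB := by
          rw [Finset.sum_add_distrib, Finset.sum_const, Finset.card_univ, Fintype.card_fin,
            smul_eq_mul]
  have h2 : (∑ b : Fin d₁.nB, ∑ a : Fin d₁.nA, ind (Fin.castAdd d₂.nA a) (Fin.castAdd d₂.nB b))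
      + (∑ b : Fin d₁.nB, ∑ a : Fin d₂.nA, ind (Fin.natAdd d₁.nA a) (Fin.castAdd d₂.nB b))
      = ∑ j, d₁.dB j := by
    rw [← Finset.sum_add_distrib]
    calc (∑ b : Fin d₁.nB, ((∑ a : Fin d₁.nA, ind (Fin.castAdd d₂.nA a) (Fin.castAdd d₂.nB b))
          + ∑ a : Fin d₂.nA, ind (Fin.natAdd d₁.nA a) (Fin.castAdd d₂.nB b)))
        = ∑ b : Fin d₁.nB, ∑ a, ind a (Fin.castAdd d₂.nB b) := by
          refine Finset.sum_congr rfl fun b _ => ?_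
          exact (Fin.sum_univ_add (f := fun a => ind a (Fin.castAdd d₂.nB b))).symm
      _ = ∑ j, d₁.dB j := by
          refine Finset.sum_congr rfl fun b _ => ?_
          exact (hcol _).trans (comp_dB_left _ _ _)
  have hle1 : ∀ (a : Fin d₁.nA), (∑ b : Fin d₂.nB, ind (Fin.castAdd d₂.nA a) (Fin.natAdd d₁.nB b)) ≤ d₂.nB := by
    intro a
    calc (∑ b : Fin d₂.nB, ind (Fin.castAdd d₂.nA a) (Fin.natAdd d₁.nB b))
        ≤ ∑ _b : Fin d₂.nB, 1 := Finset.sum_le_sum (fun b _ => by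
          simp only [hind]; split <;> omega)
      _ = d₂.nB := by simp
  have h3 : (∑ a : Fin d₁.nA, ∑ b : Fin d₂.nB, ind (Fin.castAdd d₂.nA a) (Fin.natAdd d₁.nB b))
      ≤ d₁.nA * d₂.nB := by
    calc (∑ a : Fin d₁.nA, ∑ b : Fin d₂.nB, ind (Fin.castAdd d₂.nA a) (Fin.natAdd d₁.nB b))
        ≤ ∑ _a : Fin d₁.nA, d₂.nB := Finset.sum_le_sum (fun a _ => hle1 a)
      _ = d₁.nA * d₂.nB := by simp [mul_comm]
  rw [show (∑ b : Fin d₁.nB, ∑ a : Fin d₁.nA, ind (Fin.castAdd d₂.nA a) (Fin.castAdd d₂.nB b))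
      = (∑ a : Fin d₁.nA, ∑ b : Fin d₁.nB, ind (Fin.castAdd d₂.nA a) (Fin.castAdd d₂.nB b))
    from Finset.sum_comm] at h2
  have he12 : (∑ a : Fin d₁.nA, ∑ b : Fin d₂.nB, ind (Fin.castAdd d₂.nA a) (Fin.natAdd d₁.nB b))
      = d₁.nA * d₂.nB := by omega
  have he21 : (∑ b : Fin d₁.nB, ∑ a : Fin d₂.nA, ind (Fin.natAdd d₁.nA a) (Fin.castAdd d₂.nB b))
      = 0 := by omega
  -- all cross entries A₁ × B₂ are present
  have hAB : ∀ (a : Fin d₁.nA) (b : Fin d₂.nB),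
      E (Fin.castAdd d₂.nA a) (Fin.natAdd d₁.nB b) = true := by
    have hsum : (∑ a : Fin d₁.nA, ∑ b : Fin d₂.nB, ind (Fin.castAdd d₂.nA a) (Fin.natAdd d₁.nB b))
        = ∑ _a : Fin d₁.nA, d₂.nB := by
      rw [he12]; simp [mul_comm]
    have hall := (Finset.sum_eq_sum_iff_of_le (fun a _ => hle1 a)).1 hsum
    intro a b
    have hrowa := hall a (Finset.mem_univ a)
    have : (∑ b : Fin d₂.nB, ind (Fin.castAdd d₂.nA a) (Fin.natAdd d₁.nB b))
        = ∑ _b : Fin d₂.nB, 1 := by rw [hrowa]; simp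
    have hall2 := (Finset.sum_eq_sum_iff_of_le (fun b _ => by
      simp only [hind]; split <;> omega)).1 this b (Finset.mem_univ b)
    simp only [hind] at hall2
    by_contra hc
    simp [hc] at hall2
  have hBA : ∀ (a : Fin d₂.nA) (b : Fin d₁.nB),
      E (Fin.natAdd d₁.nA a) (Fin.castAdd d₂.nB b) = false := by
    intro a b
    have h0 := Finset.sum_eq_zero_iff.1 he21 b (Finset.mem_univ b)
    have h0' := Finset.sum_eq_zero_iff.1 h0 a (Finset.mem_univ a)
    simp only [hind] at h0'
    by_contra hc
    simp [hc] at h0'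
  refine ⟨hAB, hBA, ⟨?_, ?_⟩, ⟨?_, ?_⟩⟩
  · intro a
    have := hrow (Fin.castAdd d₂.nA a)
    rw [comp_dA_left] at this
    rw [show (∑ b, ind (Fin.castAdd d₂.nA a) b)
        = (∑ b : Fin d₁.nB, ind (Fin.castAdd d₂.nA a) (Fin.castAdd d₂.nB b))
          + ∑ b : Fin d₂.nB, ind (Fin.castAdd d₂.nA a) (Fin.natAdd d₁.nB b)
      from Fin.sum_univ_add (f := fun b => ind (Fin.castAdd d₂.nA a) b)] at this
    have h2nd : (∑ b : Fin d₂.nB, ind (Fin.castAdd d₂.nA a) (Fin.natAdd d₁.nB b)) = d₂.nB := by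
      calc (∑ b : Fin d₂.nB, ind (Fin.castAdd d₂.nA a) (Fin.natAdd d₁.nB b))
          = ∑ _b : Fin d₂.nB, 1 := Finset.sum_congr rfl (fun b _ => by simp [hind, hAB a b])
        _ = d₂.nB := by simp
    rw [card_filter_eq_sum]
    show (∑ b : Fin d₁.nB, if E (Fin.castAdd d₂.nA a) (Fin.castAdd d₂.nB b) = true then 1 else 0)
      = d₁.dA a
    simp only [hind] at this h2nd
    omega
  · intro b
    have := hcol (Fin.castAdd d₂.nB b)
    rw [comp_dB_left] at this
    rw [show (∑ a, ind a (Fin.castAdd d₂.nB b))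
        = (∑ a : Fin d₁.nA, ind (Fin.castAdd d₂.nA a) (Fin.castAdd d₂.nB b))
          + ∑ a : Fin d₂.nA, ind (Fin.natAdd d₁.nA a) (Fin.castAdd d₂.nB b)
      from Fin.sum_univ_add (f := fun a => ind a (Fin.castAdd d₂.nB b))] at this
    have h2nd : (∑ a : Fin d₂.nA, ind (Fin.natAdd d₁.nA a) (Fin.castAdd d₂.nB b)) = 0 :=
      Finset.sum_eq_zero (fun a _ => by simp [hind, hBA a b])
    rw [card_filter_eq_sum]
    show (∑ a : Fin d₁.nA, if E (Fin.castAdd d₂.nA a) (Fin.castAdd d₂.nB b) = true then 1 else 0)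
      = d₁.dB b
    simp only [hind] at this h2nd
    omega
  · intro a
    have := hrow (Fin.natAdd d₁.nA a)
    rw [comp_dA_right] at this
    rw [show (∑ b, ind (Fin.natAdd d₁.nA a) b)
        = (∑ b : Fin d₁.nB, ind (Fin.natAdd d₁.nA a) (Fin.castAdd d₂.nB b))
          + ∑ b : Fin d₂.nB, ind (Fin.natAdd d₁.nA a) (Fin.natAdd d₁.nB b)
      from Fin.sum_univ_add (f := fun b => ind (Fin.natAdd d₁.nA a) b)] at this
    have h1st : (∑ b : Fin d₁.nB, ind (Fin.natAdd d₁.nA a) (Fin.castAdd d₂.nB b)) = 0 :=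
      Finset.sum_eq_zero (fun b _ => by simp [hind, hBA a b])
    rw [card_filter_eq_sum]
    show (∑ b : Fin d₂.nB, if E (Fin.natAdd d₁.nA a) (Fin.natAdd d₁.nB b) = true then 1 else 0)
      = d₂.dA a
    simp only [hind] at this h1st
    omega
  · intro b
    have := hcol (Fin.natAdd d₁.nB b)
    rw [comp_dB_right] at this
    rw [show (∑ a, ind a (Fin.natAdd d₁.nB b))
        = (∑ a : Fin d₁.nA, ind (Fin.castAdd d₂.nA a) (Fin.natAdd d₁.nB b))
          + ∑ a : Fin d₂.nA, ind (Fin.natAdd d₁.nA a) (Fin.natAdd d₁.nB b)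
      from Fin.sum_univ_add (f := fun a => ind a (Fin.natAdd d₁.nB b))] at this
    have h1st : (∑ a : Fin d₁.nA, ind (Fin.castAdd d₂.nA a) (Fin.natAdd d₁.nB b)) = d₁.nA := by
      calc (∑ a : Fin d₁.nA, ind (Fin.castAdd d₂.nA a) (Fin.natAdd d₁.nB b))
          = ∑ _a : Fin d₁.nA, 1 := Finset.sum_congr rfl (fun a _ => by simp [hind, hAB a b])
        _ = d₁.nA := by simp
    rw [card_filter_eq_sum]
    show (∑ a : Fin d₂.nA, if E (Fin.natAdd d₁.nA a) (Fin.natAdd d₁.nB b) = true then 1 else 0)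
      = d₂.dB b
    simp only [hind] at this h1st
    omega


lemma count_eq (d : BipDeg) : d.count = Set.ncard {E | Realizes d E} := rfl

section Spine

variable (α β : BipDeg)

/-- position of the distinguished `A`-vertex of the `k`-th copy. -/
def aIdx (hα : 0 < α.nA) : (s : ℕ) → Fin (s + 1) → Fin (((α.comp β).pow s).nA)
  | 0, _ => Fin.castAdd β.nA ⟨0, hα⟩
  | s+1, k => Fin.cases (Fin.castAdd ((α.comp β).pow s).nA (Fin.castAdd β.nA ⟨0, hα⟩))
      (fun k' => Fin.natAdd (α.comp β).nA (aIdx hα s k')) k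

/-- position of the distinguished `B`-vertex of the `l`-th copy. -/
def bIdx (hβ : 0 < β.nB) : (s : ℕ) → Fin (s + 1) → Fin (((α.comp β).pow s).nB)
  | 0, _ => Fin.natAdd α.nB ⟨0, hβ⟩
  | s+1, l => Fin.cases (Fin.castAdd ((α.comp β).pow s).nB (Fin.natAdd α.nB ⟨0, hβ⟩))
      (fun l' => Fin.natAdd (α.comp β).nB (bIdx hβ s l')) l

variable {α β}
variable (hα : 0 < α.nA) (hβ : 0 < β.nB)

lemma aIdx_succ_zero (s : ℕ) :
    aIdx α β hα (s+1) 0 = Fin.castAdd ((α.comp β).pow s).nA (Fin.castAdd β.nA ⟨0, hα⟩) := by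
  rfl

lemma aIdx_succ_succ (s : ℕ) (k : Fin (s+1)) :
    aIdx α β hα (s+1) k.succ = Fin.natAdd (α.comp β).nA (aIdx α β hα s k) := by
  rfl

lemma bIdx_succ_zero (s : ℕ) :
    bIdx α β hβ (s+1) 0 = Fin.castAdd ((α.comp β).pow s).nB (Fin.natAdd α.nB ⟨0, hβ⟩) := by
  rfl

lemma bIdx_succ_succ (s : ℕ) (l : Fin (s+1)) :
    bIdx α β hβ (s+1) l.succ = Fin.natAdd (α.comp β).nB (bIdx α β hβ s l) := by
  rfl

lemma aIdx_inj : ∀ (s : ℕ) (k k' : Fin (s+1)),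
    aIdx α β hα s k = aIdx α β hα s k' → k = k'
  | 0, k, k', _ => Fin.ext (by omega)
  | s+1, k, k', h => by
    induction k using Fin.cases with
    | zero =>
      induction k' using Fin.cases with
      | zero => rfl
      | succ k' =>
        rw [aIdx_succ_zero, aIdx_succ_succ] at h
        have := congrArg Fin.val h
        simp only [Fin.coe_castAdd, Fin.coe_natAdd] at this
        exfalso
        have h1 : (α.comp β).nA = α.nA + β.nA := rfl
        omega
    | succ k =>
      induction k' using Fin.cases with
      | zero =>
        rw [aIdx_succ_zero, aIdx_succ_succ] at h
        have := congrArg Fin.val h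
        simp only [Fin.coe_castAdd, Fin.coe_natAdd] at this
        exfalso
        have h1 : (α.comp β).nA = α.nA + β.nA := rfl
        omega
      | succ k' =>
        rw [aIdx_succ_succ, aIdx_succ_succ] at h
        have := congrArg Fin.val h
        simp only [Fin.coe_natAdd] at this
        have : aIdx α β hα s k = aIdx α β hα s k' := Fin.ext (by omega)
        rw [aIdx_inj s k k' this]

lemma bIdx_inj : ∀ (s : ℕ) (l l' : Fin (s+1)),
    bIdx α β hβ s l = bIdx α β hβ s l' → l = l'
  | 0, l, l', _ => Fin.ext (by omega)
  | s+1, l, l', h => by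
    induction l using Fin.cases with
    | zero =>
      induction l' using Fin.cases with
      | zero => rfl
      | succ l' =>
        rw [bIdx_succ_zero, bIdx_succ_succ] at h
        have := congrArg Fin.val h
        simp only [Fin.coe_castAdd, Fin.coe_natAdd] at this
        exfalso
        have h1 : (α.comp β).nB = α.nB + β.nB := rfl
        have h2 := (bIdx α β hβ s l').isLt
        have h3 : (Fin.natAdd α.nB (⟨0, hβ⟩ : Fin β.nB)).val = α.nB := by simp
        omega
    | succ l =>
      induction l' using Fin.cases with
      | zero =>
        rw [bIdx_succ_zero, bIdx_succ_succ] at h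
        have := congrArg Fin.val h
        simp only [Fin.coe_castAdd, Fin.coe_natAdd] at this
        exfalso
        have h1 : (α.comp β).nB = α.nB + β.nB := rfl
        omega
      | succ l' =>
        rw [bIdx_succ_succ, bIdx_succ_succ] at h
        have := congrArg Fin.val h
        simp only [Fin.coe_natAdd] at this
        have : bIdx α β hβ s l = bIdx α β hβ s l' := Fin.ext (by omega)
        rw [bIdx_inj s l l' this]

lemma spine (hαbal : ∑ i, α.dA i = ∑ j, α.dB j)
    (hγbal : ∑ i, (α.comp β).dA i = ∑ j, (α.comp β).dB j) :
    ∀ (s : ℕ) (E : Fin (((α.comp β).pow s).nA) → Fin (((α.comp β).pow s).nB) → Bool),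
      Realizes ((α.comp β).pow s) E → ∀ (k l : Fin (s+1)),
      E (aIdx α β hα s k) (bIdx α β hβ s l) = decide (k.val ≤ l.val)
  | 0, E, hE, k, l => by
    have hf := (forced (d₁ := α) (d₂ := β) hαbal hE).1 ⟨0, hα⟩ ⟨0, hβ⟩
    have hk : k.val = 0 := by omega
    have hl : l.val = 0 := by omega
    have : aIdx α β hα 0 k = Fin.castAdd β.nA ⟨0, hα⟩ := rfl
    rw [this]
    have : bIdx α β hβ 0 l = Fin.natAdd α.nB ⟨0, hβ⟩ := rfl
    rw [this, hf, hk, hl]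
    rfl
  | s+1, E, hE, k, l => by
    obtain ⟨hAB, hBA, hE1, hE2⟩ := forced (d₁ := α.comp β) (d₂ := (α.comp β).pow s) hγbal hE
    induction k using Fin.cases with
    | zero =>
      induction l using Fin.cases with
      | zero =>
        rw [aIdx_succ_zero, bIdx_succ_zero]
        have hf := (forced (d₁ := α) (d₂ := β) hαbal hE1).1 ⟨0, hα⟩ ⟨0, hβ⟩
        exact hf.trans (by simp)
      | succ l =>
        rw [aIdx_succ_zero, bIdx_succ_succ]
        have hf := hAB (Fin.castAdd β.nA ⟨0, hα⟩) (bIdx α β hβ s l)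
        exact hf.trans (by simp)
    | succ k =>
      induction l using Fin.cases with
      | zero =>
        rw [aIdx_succ_succ, bIdx_succ_zero]
        have hf := hBA (aIdx α β hα s k) (Fin.natAdd α.nB ⟨0, hβ⟩)
        refine hf.trans ?_
        simp [Fin.val_succ]
      | succ l =>
        rw [aIdx_succ_succ, bIdx_succ_succ]
        have hf := spine hαbal hγbal s
          (fun a b => E (Fin.natAdd (α.comp β).nA a) (Fin.natAdd (α.comp β).nB b)) hE2 k l
        refine hf.trans ?_
        simp [Fin.val_succ, decide_eq_decide, Nat.succ_le_succ_iff]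

lemma dA_pos : ∀ s : ℕ, 0 < β.nB → 0 < ((α.comp β).pow s).dA (aIdx α β hα s 0)
  | 0, h => by
    have : aIdx α β hα 0 0 = Fin.castAdd β.nA ⟨0, hα⟩ := rfl
    rw [this]
    have := comp_dA_left α β ⟨0, hα⟩
    show 0 < (α.comp β).dA (Fin.castAdd β.nA ⟨0, hα⟩)
    omega
  | s+1, h => by
    rw [aIdx_succ_zero]
    have h2 := comp_dA_left (α.comp β) ((α.comp β).pow s) (Fin.castAdd β.nA ⟨0, hα⟩)
    have h3 := comp_dA_left α β ⟨0, hα⟩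
    show 0 < ((α.comp β).comp ((α.comp β).pow s)).dA
      (Fin.castAdd ((α.comp β).pow s).nA (Fin.castAdd β.nA ⟨0, hα⟩))
    omega

lemma dB_pos : ∀ s : ℕ, 0 < α.nA → 0 < ((α.comp β).pow s).dB (bIdx α β hβ s (Fin.last s))
  | 0, h => by
    have : bIdx α β hβ 0 (Fin.last 0) = Fin.natAdd α.nB ⟨0, hβ⟩ := rfl
    rw [this]
    have := comp_dB_right α β ⟨0, hβ⟩
    show 0 < (α.comp β).dB (Fin.natAdd α.nB ⟨0, hβ⟩)
    omega
  | s+1, h => by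
    have hlast : (Fin.last (s+1)) = (Fin.last s).succ := (Fin.succ_last s).symm
    rw [hlast, bIdx_succ_succ]
    have h2 := comp_dB_right (α.comp β) ((α.comp β).pow s) (bIdx α β hβ s (Fin.last s))
    have h3 := dB_pos s h
    show 0 < ((α.comp β).comp ((α.comp β).pow s)).dB
      (Fin.natAdd (α.comp β).nB (bIdx α β hβ s (Fin.last s)))
    omega

end Spine

section Main

variable {α β : BipDeg} (hα : 0 < α.nA) (hβ : 0 < β.nB)

/-- the perturbed degree sequence. -/
def dSeq' (s : ℕ) : BipDeg :=
  ⟨((α.comp β).pow s).nA, ((α.comp β).pow s).nB,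
   fun i => ((α.comp β).pow s).dA i - (if i = aIdx α β hα s 0 then 1 else 0),
   fun j => ((α.comp β).pow s).dB j - (if j = bIdx α β hβ s (Fin.last s) then 1 else 0)⟩

/-- replace the (forced) spine submatrix of a realization by the matrix `Fmat T`. -/
noncomputable def modify (s : ℕ) (T : Finset ℕ)
    (E : Fin (((α.comp β).pow s).nA) → Fin (((α.comp β).pow s).nB) → Bool) :
    Fin (((α.comp β).pow s).nA) → Fin (((α.comp β).pow s).nB) → Bool :=
  fun a b =>
    if h1 : ∃ k, aIdx α β hα s k = a then
      if h2 : ∃ l, bIdx α β hβ s l = b then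
        Fmat T (s+1) h1.choose.val h2.choose.val
      else E a b
    else E a b

lemma modify_spine (s : ℕ) (T : Finset ℕ) (E) (k l : Fin (s+1)) :
    modify hα hβ s T E (aIdx α β hα s k) (bIdx α β hβ s l) = Fmat T (s+1) k.val l.val := by
  unfold modify
  have h1 : ∃ k', aIdx α β hα s k' = aIdx α β hα s k := ⟨k, rfl⟩
  have h2 : ∃ l', bIdx α β hβ s l' = bIdx α β hβ s l := ⟨l, rfl⟩
  rw [dif_pos h1, dif_pos h2, aIdx_inj hα s _ k h1.choose_spec,
    bIdx_inj hβ s _ l h2.choose_spec]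

lemma modify_off (s : ℕ) (T : Finset ℕ) (E) (a b)
    (h : (¬ ∃ k, aIdx α β hα s k = a) ∨ (¬ ∃ l, bIdx α β hβ s l = b)) :
    modify hα hβ s T E a b = E a b := by
  unfold modify
  rcases h with h | h
  · rw [dif_neg h]
  · split <;> first | rfl | exact dif_neg h

lemma row_split (s : ℕ) (G : Fin (((α.comp β).pow s).nB) → Bool) :
    (Finset.univ.filter fun b => G b = true).card
      = (∑ l : Fin (s+1), if G (bIdx α β hβ s l) = true then 1 else 0)
        + ∑ b ∈ (Finset.image (bIdx α β hβ s) Finset.univ)ᶜ, (if G b = true then 1 else 0) := by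
  rw [card_filter_eq_sum,
    ← Finset.sum_add_sum_compl (Finset.image (bIdx α β hβ s) Finset.univ)]
  congr 1
  rw [Finset.sum_image (fun x _ y _ h => bIdx_inj hβ s x y h)]

lemma col_split (s : ℕ) (G : Fin (((α.comp β).pow s).nA) → Bool) :
    (Finset.univ.filter fun a => G a = true).card
      = (∑ k : Fin (s+1), if G (aIdx α β hα s k) = true then 1 else 0)
        + ∑ a ∈ (Finset.image (aIdx α β hα s) Finset.univ)ᶜ, (if G a = true then 1 else 0) := by
  rw [card_filter_eq_sum,
    ← Finset.sum_add_sum_compl (Finset.image (aIdx α β hα s) Finset.univ)]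
  congr 1
  rw [Finset.sum_image (fun x _ y _ h => aIdx_inj hα s x y h)]

lemma filter_le'_range_card {r l : ℕ} (hl : l < r) :
    ((Finset.range r).filter (fun k => k ≤ l)).card = l + 1 := by
  have : (Finset.range r).filter (fun k => k ≤ l) = Finset.range (l+1) := by
    ext k; simp only [Finset.mem_filter, Finset.mem_range]; omega
  rw [this, Finset.card_range]

lemma modify_row (hαbal : ∑ i, α.dA i = ∑ j, α.dB j)
    (hγbal : ∑ i, (α.comp β).dA i = ∑ j, (α.comp β).dB j)
    (s : ℕ) (T : Finset ℕ) (hT : T ⊆ Finset.range s) (E)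
    (hE : Realizes ((α.comp β).pow s) E) (a) :
    (Finset.univ.filter fun b => modify hα hβ s T E a b = true).card
      = ((α.comp β).pow s).dA a - (if a = aIdx α β hα s 0 then 1 else 0) := by
  have hT' : ∀ x ∈ T, x < (s+1) - 1 := by
    intro x hx
    have := hT hx
    simp only [Finset.mem_range] at this
    omega
  by_cases h1 : ∃ k, aIdx α β hα s k = a
  · obtain ⟨k, rfl⟩ := h1
    have hrowM := row_split hβ s (fun b => modify hα hβ s T E (aIdx α β hα s k) b)
    have hrowE := row_split hβ s (fun b => E (aIdx α β hα s k) b)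
    have hrest : (∑ b ∈ (Finset.image (bIdx α β hβ s) Finset.univ)ᶜ,
        (if modify hα hβ s T E (aIdx α β hα s k) b = true then 1 else 0))
        = ∑ b ∈ (Finset.image (bIdx α β hβ s) Finset.univ)ᶜ,
        (if E (aIdx α β hα s k) b = true then 1 else 0) := by
      refine Finset.sum_congr rfl fun b hb => ?_
      simp only [Finset.mem_compl, Finset.mem_image, Finset.mem_univ, true_and] at hb
      rw [modify_off hα hβ s T E _ _ (Or.inr (by simpa using hb))]
    have hM : (∑ l : Fin (s+1),
        if modify hα hβ s T E (aIdx α β hα s k) (bIdx α β hβ s l) = true then 1 else 0)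
        = (s+1) - k.val - (if k.val = 0 then 1 else 0) := by
      calc (∑ l : Fin (s+1),
          if modify hα hβ s T E (aIdx α β hα s k) (bIdx α β hβ s l) = true then 1 else 0)
          = ∑ l : Fin (s+1), if Fmat T (s+1) k.val l.val = true then 1 else 0 := by
            refine Finset.sum_congr rfl fun l _ => ?_
            rw [modify_spine]
        _ = ∑ lv ∈ Finset.range (s+1), if Fmat T (s+1) k.val lv = true then 1 else 0 :=
            Fin.sum_univ_eq_sum_range (fun lv => if Fmat T (s+1) k.val lv = true then 1 else 0) _
        _ = ((Finset.range (s+1)).filter (fun lv => Fmat T (s+1) k.val lv = true)).card :=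
            (Finset.card_filter _ _).symm
        _ = (s+1) - k.val - (if k.val = 0 then 1 else 0) := Fmat_row hT' k.isLt
    have hEs : (∑ l : Fin (s+1),
        if E (aIdx α β hα s k) (bIdx α β hβ s l) = true then 1 else 0)
        = (s+1) - k.val := by
      calc (∑ l : Fin (s+1), if E (aIdx α β hα s k) (bIdx α β hβ s l) = true then 1 else 0)
          = ∑ l : Fin (s+1), if k.val ≤ l.val then 1 else 0 := by
            refine Finset.sum_congr rfl fun l _ => ?_
            rw [spine hα hβ hαbal hγbal s E hE k l]
            simp
        _ = ∑ lv ∈ Finset.range (s+1), if k.val ≤ lv then 1 else 0 :=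
            Fin.sum_univ_eq_sum_range (fun lv => if k.val ≤ lv then 1 else 0) _
        _ = ((Finset.range (s+1)).filter (fun lv => k.val ≤ lv)).card :=
            (Finset.card_filter _ _).symm
        _ = (s+1) - k.val := filter_le_range_card (s+1) k.val
    have hEr := hE.1 (aIdx α β hα s k)
    have hcond : (aIdx α β hα s k = aIdx α β hα s 0) ↔ (k.val = 0) := by
      constructor
      · intro h
        have := aIdx_inj hα s k 0 h
        rw [this]; rfl
      · intro h
        have : k = 0 := Fin.ext (by simpa using h)
        rw [this]
    have hk : k.val ≤ s := by omega
    have hcomb : ((α.comp β).pow s).dA (aIdx α β hα s k)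
        = ((s+1) - k.val) + ∑ b ∈ (Finset.image (bIdx α β hβ s) Finset.univ)ᶜ,
            (if E (aIdx α β hα s k) b = true then 1 else 0) := by
      rw [← hEr, hrowE, hEs]
    by_cases hk0 : k.val = 0
    · rw [if_pos (hcond.2 hk0), hrowM, hM, hrest, if_pos hk0]
      omega
    · rw [if_neg (fun hc => hk0 (hcond.1 hc)), hrowM, hM, hrest, if_neg hk0]
      omega
  · have heq : ∀ b, modify hα hβ s T E a b = E a b :=
      fun b => modify_off hα hβ s T E a b (Or.inl h1)
    have : (Finset.univ.filter fun b => modify hα hβ s T E a b = true)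
        = (Finset.univ.filter fun b => E a b = true) := by
      refine Finset.filter_congr fun b _ => ?_
      rw [heq b]
    rw [this, hE.1 a, if_neg (fun hc => h1 ⟨0, hc.symm⟩)]
    omega

lemma modify_col (hαbal : ∑ i, α.dA i = ∑ j, α.dB j)
    (hγbal : ∑ i, (α.comp β).dA i = ∑ j, (α.comp β).dB j)
    (s : ℕ) (T : Finset ℕ) (hT : T ⊆ Finset.range s) (E)
    (hE : Realizes ((α.comp β).pow s) E) (b) :
    (Finset.univ.filter fun a => modify hα hβ s T E a b = true).card
      = ((α.comp β).pow s).dB b - (if b = bIdx α β hβ s (Fin.last s) then 1 else 0) := by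
  have hT' : ∀ x ∈ T, x < (s+1) - 1 := by
    intro x hx
    have := hT hx
    simp only [Finset.mem_range] at this
    omega
  by_cases h2 : ∃ l, bIdx α β hβ s l = b
  · obtain ⟨l, rfl⟩ := h2
    have hcolM := col_split hα s (fun a => modify hα hβ s T E a (bIdx α β hβ s l))
    have hcolE := col_split hα s (fun a => E a (bIdx α β hβ s l))
    have hrest : (∑ a ∈ (Finset.image (aIdx α β hα s) Finset.univ)ᶜ,
        (if modify hα hβ s T E a (bIdx α β hβ s l) = true then 1 else 0))
        = ∑ a ∈ (Finset.image (aIdx α β hα s) Finset.univ)ᶜ,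
        (if E a (bIdx α β hβ s l) = true then 1 else 0) := by
      refine Finset.sum_congr rfl fun a ha => ?_
      simp only [Finset.mem_compl, Finset.mem_image, Finset.mem_univ, true_and] at ha
      rw [modify_off hα hβ s T E _ _ (Or.inl (by simpa using ha))]
    have hM : (∑ k : Fin (s+1),
        if modify hα hβ s T E (aIdx α β hα s k) (bIdx α β hβ s l) = true then 1 else 0)
        = l.val + 1 - (if l.val = (s+1) - 1 then 1 else 0) := by
      calc (∑ k : Fin (s+1),
          if modify hα hβ s T E (aIdx α β hα s k) (bIdx α β hβ s l) = true then 1 else 0)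
          = ∑ k : Fin (s+1), if Fmat T (s+1) k.val l.val = true then 1 else 0 := by
            refine Finset.sum_congr rfl fun k _ => ?_
            rw [modify_spine]
        _ = ∑ kv ∈ Finset.range (s+1), if Fmat T (s+1) kv l.val = true then 1 else 0 :=
            Fin.sum_univ_eq_sum_range (fun kv => if Fmat T (s+1) kv l.val = true then 1 else 0) _
        _ = ((Finset.range (s+1)).filter (fun kv => Fmat T (s+1) kv l.val = true)).card :=
            (Finset.card_filter _ _).symm
        _ = l.val + 1 - (if l.val = (s+1) - 1 then 1 else 0) := Fmat_col hT' l.isLt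
    have hEs : (∑ k : Fin (s+1),
        if E (aIdx α β hα s k) (bIdx α β hβ s l) = true then 1 else 0)
        = l.val + 1 := by
      calc (∑ k : Fin (s+1), if E (aIdx α β hα s k) (bIdx α β hβ s l) = true then 1 else 0)
          = ∑ k : Fin (s+1), if k.val ≤ l.val then 1 else 0 := by
            refine Finset.sum_congr rfl fun k _ => ?_
            rw [spine hα hβ hαbal hγbal s E hE k l]
            simp
        _ = ∑ kv ∈ Finset.range (s+1), if kv ≤ l.val then 1 else 0 :=
            Fin.sum_univ_eq_sum_range (fun kv => if kv ≤ l.val then 1 else 0) _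
        _ = ((Finset.range (s+1)).filter (fun kv => kv ≤ l.val)).card :=
            (Finset.card_filter _ _).symm
        _ = l.val + 1 := filter_le'_range_card l.isLt
    have hEc := hE.2 (bIdx α β hβ s l)
    have hcond : (bIdx α β hβ s l = bIdx α β hβ s (Fin.last s)) ↔ (l.val = s) := by
      constructor
      · intro h
        have := bIdx_inj hβ s l (Fin.last s) h
        rw [this]; rfl
      · intro h
        have : l = Fin.last s := Fin.ext (by simpa using h)
        rw [this]
    have hl : l.val ≤ s := by omega
    have hcomb : ((α.comp β).pow s).dB (bIdx α β hβ s l)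
        = (l.val + 1) + ∑ a ∈ (Finset.image (aIdx α β hα s) Finset.univ)ᶜ,
            (if E a (bIdx α β hβ s l) = true then 1 else 0) := by
      rw [← hEc, hcolE, hEs]
    by_cases hl0 : l.val = s
    · rw [if_pos (hcond.2 hl0), hcolM, hM, hrest,
        if_pos (show l.val = s + 1 - 1 by omega)]
      omega
    · rw [if_neg (fun hc => hl0 (hcond.1 hc)), hcolM, hM, hrest,
        if_neg (show ¬ l.val = s + 1 - 1 by omega)]
      omega
  · have heq : ∀ a, modify hα hβ s T E a b = E a b :=
      fun a => modify_off hα hβ s T E a b (Or.inr h2)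
    have : (Finset.univ.filter fun a => modify hα hβ s T E a b = true)
        = (Finset.univ.filter fun a => E a b = true) := by
      refine Finset.filter_congr fun a _ => ?_
      rw [heq a]
    rw [this, hE.2 b, if_neg (fun hc => h2 ⟨Fin.last s, hc.symm⟩)]
    omega

lemma main_bound (hαbal : ∑ i, α.dA i = ∑ j, α.dB j)
    (hγbal : ∑ i, (α.comp β).dA i = ∑ j, (α.comp β).dB j) (s : ℕ) :
    ((α.comp β).pow s).count * 2 ^ s ≤ (dSeq' hα hβ s).count := by
  rw [count_eq, count_eq, ← Nat.card_coe_set_eq, ← Nat.card_coe_set_eq]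
  have hpow : Nat.card {T : Finset ℕ // T ∈ (Finset.range s).powerset} = 2 ^ s := by
    rw [Nat.card_eq_fintype_card, Fintype.card_coe, Finset.card_powerset, Finset.card_range]
  rw [← hpow, ← Nat.card_prod]
  have hmem : ∀ (E : ↥{E | Realizes ((α.comp β).pow s) E})
      (T : {T : Finset ℕ // T ∈ (Finset.range s).powerset}),
      Realizes (dSeq' hα hβ s) (modify hα hβ s T.1 E.1) := by
    intro E T
    have hT : T.1 ⊆ Finset.range s := Finset.mem_powerset.1 T.2
    exact ⟨fun a => modify_row hα hβ hαbal hγbal s T.1 hT E.1 E.2 a,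
      fun b => modify_col hα hβ hαbal hγbal s T.1 hT E.1 E.2 b⟩
  refine Nat.card_le_card_of_injective
    (fun p => (⟨modify hα hβ s p.2.1 p.1.1, hmem p.1 p.2⟩ :
      ↥{E | Realizes (dSeq' hα hβ s) E})) ?_
  rintro ⟨⟨E₁, hE₁⟩, ⟨T₁, hT₁⟩⟩ ⟨⟨E₂, hE₂⟩, ⟨T₂, hT₂⟩⟩ hpq
  simp only [Subtype.mk.injEq] at hpq
  replace hpq : modify hα hβ s T₁ E₁ = modify hα hβ s T₂ E₂ := congrArg Subtype.val hpq
  have hT₁' := Finset.mem_powerset.1 hT₁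
  have hT₂' := Finset.mem_powerset.1 hT₂
  have hTT : T₁ = T₂ := by
    ext x
    by_cases hx : x < s
    · have hcell := congrFun (congrFun hpq (aIdx α β hα s ⟨x+1, by omega⟩))
        (bIdx α β hβ s ⟨x, by omega⟩)
      rw [modify_spine, modify_spine] at hcell
      simp only [Fmat_sub] at hcell
      exact decide_eq_decide.1 hcell
    · constructor
      · intro h
        have := hT₁' h; simp only [Finset.mem_range] at this; omega
      · intro h
        have := hT₂' h; simp only [Finset.mem_range] at this; omega
  have hEE : E₁ = E₂ := by
    funext a b
    by_cases h1 : ∃ k, aIdx α β hα s k = a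
    · obtain ⟨k, rfl⟩ := h1
      by_cases h2 : ∃ l, bIdx α β hβ s l = b
      · obtain ⟨l, rfl⟩ := h2
        rw [spine hα hβ hαbal hγbal s E₁ hE₁ k l, spine hα hβ hαbal hγbal s E₂ hE₂ k l]
      · have e1 := modify_off hα hβ s T₁ E₁ (aIdx α β hα s k) b (Or.inr h2)
        have e2 := modify_off hα hβ s T₂ E₂ (aIdx α β hα s k) b (Or.inr h2)
        rw [← e1, ← e2, hpq]
    · have e1 := modify_off hα hβ s T₁ E₁ a b (Or.inl h1)
      have e2 := modify_off hα hβ s T₂ E₂ a b (Or.inl h1)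
      rw [← e1, ← e2, hpq]
  simp only [Prod.mk.injEq, Subtype.mk.injEq]
  exact ⟨hEE, hTT⟩

lemma dist_one {n : ℕ} (f : Fin n → ℕ) (i0 : Fin n) (hpos : 0 < f i0) :
    ∑ i, |((f i - (if i = i0 then 1 else 0) : ℕ) : ℤ) - (f i : ℤ)| = 1 := by
  rw [Finset.sum_eq_single i0]
  · rw [if_pos rfl]
    have h1 : ((f i0 - 1 : ℕ) : ℤ) = (f i0 : ℤ) - 1 := by omega
    rw [h1]
    simp
  · intro i _ hi
    rw [if_neg hi]
    simp
  · intro h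
    exact absurd (Finset.mem_univ i0) h

end Main

end Stab

/-- If a class of bipartite degree sequences contains a graphic `α` with
non-empty first class and a graphic `β` with non-empty second class, its
closure under Tyshkevich composition is not `P`-stable: for
`d(r) = (α ∘ β)^{∘ r}` there is a degree sequence `d'` at `ℓ¹`-distance `2`
from `d(r)` with `|𝒢(d')| ≥ C·|𝒢(d(r))|·c^r` for constants `c > 1`, `C > 0`. -/
theorem stmt_14 (α β : BipDeg) (hα : 0 < α.nA) (hβ : 0 < β.nB)
    (hαc : 0 < α.count) (hβc : 0 < β.count) :
    ∃ c C : ℝ, 1 < c ∧ 0 < C ∧ ∀ r : ℕ, 1 ≤ r →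
      let d := BipDeg.pow (α.comp β) (r - 1)
      ∃ (dA' : Fin d.nA → ℕ) (dB' : Fin d.nB → ℕ),
        (∑ i, |(dA' i : ℤ) - (d.dA i : ℤ)|) +
          (∑ j, |(dB' j : ℤ) - (d.dB j : ℤ)|) = 2 ∧
        C * ((d.count : ℝ) * c ^ r) ≤
          (BipDeg.count ⟨d.nA, d.nB, dA', dB'⟩ : ℝ) := by
  have hαbal : ∑ i, α.dA i = ∑ j, α.dB j := by
    obtain ⟨E, hE⟩ := Set.nonempty_of_ncard_ne_zero
      (s := {E | Stab.Realizes α E}) (by rw [← Stab.count_eq]; omega)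
    exact Stab.balance hE
  have hβbal : ∑ i, β.dA i = ∑ j, β.dB j := by
    obtain ⟨E, hE⟩ := Set.nonempty_of_ncard_ne_zero
      (s := {E | Stab.Realizes β E}) (by rw [← Stab.count_eq]; omega)
    exact Stab.balance hE
  have hγbal : ∑ i, (α.comp β).dA i = ∑ j, (α.comp β).dB j := by
    have h1 : ∑ i, (α.comp β).dA i
        = (∑ a : Fin α.nA, (α.comp β).dA (Fin.castAdd β.nA a))
          + ∑ a : Fin β.nA, (α.comp β).dA (Fin.natAdd α.nA a) := Fin.sum_univ_add _
    have h2 : ∑ j, (α.comp β).dB j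
        = (∑ b : Fin α.nB, (α.comp β).dB (Fin.castAdd β.nB b))
          + ∑ b : Fin β.nB, (α.comp β).dB (Fin.natAdd α.nB b) := Fin.sum_univ_add _
    simp only [Stab.comp_dA_left, Stab.comp_dA_right] at h1
    simp only [Stab.comp_dB_left, Stab.comp_dB_right] at h2
    rw [h1, h2, Finset.sum_add_distrib, Finset.sum_add_distrib, Finset.sum_const,
      Finset.sum_const, Finset.card_univ, Finset.card_univ, Fintype.card_fin, Fintype.card_fin,
      smul_eq_mul, smul_eq_mul]
    have hmc : α.nA * β.nB = β.nB * α.nA := Nat.mul_comm _ _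
    omega
  refine ⟨2, 1/2, by norm_num, by norm_num, ?_⟩
  intro r hr
  obtain ⟨s, rfl⟩ : ∃ s, r = s + 1 := ⟨r - 1, by omega⟩
  intro d
  refine ⟨(Stab.dSeq' hα hβ s).dA, (Stab.dSeq' hα hβ s).dB, ?_, ?_⟩
  · have h1 : (∑ i, |(((Stab.dSeq' hα hβ s).dA i : ℤ)) - (((α.comp β).pow s).dA i : ℤ)|) = 1 :=
      Stab.dist_one ((α.comp β).pow s).dA (Stab.aIdx α β hα s 0) (Stab.dA_pos hα s hβ)
    have h2 : (∑ j, |(((Stab.dSeq' hα hβ s).dB j : ℤ)) - (((α.comp β).pow s).dB j : ℤ)|) = 1 :=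
      Stab.dist_one ((α.comp β).pow s).dB (Stab.bIdx α β hβ s (Fin.last s)) (Stab.dB_pos hβ s hα)
    show (∑ i, |(((Stab.dSeq' hα hβ s).dA i : ℤ)) - (((α.comp β).pow s).dA i : ℤ)|)
        + (∑ j, |(((Stab.dSeq' hα hβ s).dB j : ℤ)) - (((α.comp β).pow s).dB j : ℤ)|) = 2
    rw [h1, h2]
    norm_num
  · have hb := Stab.main_bound hα hβ hαbal hγbal s
    have hb' : (((α.comp β).pow s).count : ℝ) * 2 ^ s ≤ ((Stab.dSeq' hα hβ s).count : ℝ) := by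
      exact_mod_cast hb
    show (1/2 : ℝ) * ((((α.comp β).pow s).count : ℝ) * 2 ^ (s+1))
        ≤ ((Stab.dSeq' hα hβ s).count : ℝ)
    calc (1/2 : ℝ) * ((((α.comp β).pow s).count : ℝ) * 2 ^ (s+1))
        = (((α.comp β).pow s).count : ℝ) * 2 ^ s := by rw [pow_succ]; ring
      _ ≤ _ := hb'
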